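/- arXiv:1001.2795 — 7 statements merged into one kernel-verified Lean document; each statement's English description precedes it below -/
import Mathlib

section
/- Let V be a vector space over a field, L : V → V a linear idempotent, T = id − L, and χ : V → V invertible. Suppose A : V → V is a linear map satisfying L∘A∘L = A, A∘(L∘χ∘L) = L, and (L∘χ∘L)∘A = L (i.e., A is the inverse of L∘χ∘L on the range of L). Then (T∘χ∘T − T∘χ∘A∘χ∘T)∘(T∘χ⁻¹∘T) = T and (T∘χ⁻¹∘T)∘(T∘χ∘T − T∘χ∘A∘χ∘T) = T. -/
/-- Auxiliary ring-theoretic version of the Schur-complement inverse identity. -/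
lemma schur_ring_aux {R : Type*} [Ring R] (L χ χ' A : R)
    (hL : L * L = L)
    (hχ : χ * χ' = 1) (hχ' : χ' * χ = 1)
    (hA1 : L * (A * L) = A)
    (hA2 : A * (L * (χ * L)) = L)
    (hA3 : (L * (χ * L)) * A = L) :
    ((1-L) * (χ * (1-L)) - (1-L) * (χ * (A * (χ * (1-L))))) * ((1-L) * (χ' * (1-L))) = 1 - L ∧
    ((1-L) * (χ' * (1-L))) * ((1-L) * (χ * (1-L)) - (1-L) * (χ * (A * (χ * (1-L))))) = 1 - L := by
  have hA1' : L * A * L = A := by rw [mul_assoc]; exact hA1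
  have hAL : A * L = A := by rw [← hA1', mul_assoc, mul_assoc, hL, ← mul_assoc]
  have hLA : L * A = A := by rw [← hA1', ← mul_assoc, ← mul_assoc, hL]
  have hAχL : A * (χ * L) = L := by
    rw [← mul_assoc, ← hAL, mul_assoc A L χ, mul_assoc, mul_assoc L χ L]
    exact hA2
  have hLχA : L * (χ * A) = L := by
    rw [← mul_assoc, ← hLA, ← mul_assoc, mul_assoc L χ L]
    exact hA3
  have r1 : ∀ x : R, L * (L * x) = L * x := fun x => by rw [← mul_assoc, hL]
  have r2 : ∀ x : R, χ * (χ' * x) = x := fun x => by rw [← mul_assoc, hχ, one_mul]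
  have r3 : ∀ x : R, χ' * (χ * x) = x := fun x => by rw [← mul_assoc, hχ', one_mul]
  have r4 : ∀ x : R, A * (χ * (L * x)) = L * x := fun x => by
    rw [← mul_assoc, ← mul_assoc, mul_assoc A χ L, hAχL]
  have r5 : ∀ x : R, L * (χ * (A * x)) = L * x := fun x => by
    rw [← mul_assoc, ← mul_assoc, mul_assoc L χ A, hLχA]
  have r6 : ∀ x : R, L * (A * x) = A * x := fun x => by rw [← mul_assoc, hLA]
  have r7 : ∀ x : R, A * (L * x) = A * x := fun x => by rw [← mul_assoc, hAL]
  constructor <;>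
  · simp only [mul_sub, sub_mul, mul_one, one_mul, mul_assoc, hL, hχ, hχ', hAL, hLA,
      hAχL, hLχA, r1, r2, r3, r4, r5, r6, r7]
    abel

/-- If `L` is a linear idempotent, `T = id - L`, `χ` invertible (inverse `χ'`),
and `A` is the inverse of `L∘χ∘L` on the range of `L`, then
`(T∘χ∘T − T∘χ∘A∘χ∘T)` and `T∘χ⁻¹∘T` are mutually inverse on the range of `T`. -/
theorem schur_complement_transverse_inverse
    {K V : Type*} [Field K] [AddCommGroup V] [Module K V]
    (L T χ χ' A : V →ₗ[K] V)
    (hL : L ∘ₗ L = L)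
    (hT : T = LinearMap.id - L)
    (hχ : χ ∘ₗ χ' = LinearMap.id) (hχ' : χ' ∘ₗ χ = LinearMap.id)
    (hA1 : L ∘ₗ A ∘ₗ L = A)
    (hA2 : A ∘ₗ (L ∘ₗ χ ∘ₗ L) = L)
    (hA3 : (L ∘ₗ χ ∘ₗ L) ∘ₗ A = L) :
    (T ∘ₗ χ ∘ₗ T - T ∘ₗ χ ∘ₗ A ∘ₗ χ ∘ₗ T) ∘ₗ (T ∘ₗ χ' ∘ₗ T) = T ∧
    (T ∘ₗ χ' ∘ₗ T) ∘ₗ (T ∘ₗ χ ∘ₗ T - T ∘ₗ χ ∘ₗ A ∘ₗ χ ∘ₗ T) = T := by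
  subst hT
  simp only [← Module.End.mul_eq_comp, ← Module.End.one_eq_id] at *
  exact schur_ring_aux L χ χ' A hL hχ hχ' hA1 hA2 hA3
end

section
/- Let V be a vector space over a field, L : V → V a linear idempotent, T = id − L, and χ : V → V invertible. Suppose A : V → V satisfies L∘A∘L = A, A∘(L∘χ∘L) = L, and (L∘χ∘L)∘A = L. Then X := χ − χ∘A∘χ is the inverse of T∘χ⁻¹∘T on the range of T; that is, T∘X∘T = X, X∘(T∘χ⁻¹∘T) = T, and (T∘χ⁻¹∘T)∘X = T. -/
/-- If `L` is a linear idempotent, `T = id - L`, `χ` invertible (inverse `χ'`),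
and `A` is the inverse of `L∘χ∘L` on the range of `L`, then `X := χ − χ∘A∘χ`
is the inverse of `T∘χ⁻¹∘T` on the range of `T`. -/
theorem schur_complement_is_transverse_inverse
    {K V : Type*} [Field K] [AddCommGroup V] [Module K V]
    (L T χ χ' A : V →ₗ[K] V)
    (hL : L ∘ₗ L = L)
    (hT : T = LinearMap.id - L)
    (hχ : χ ∘ₗ χ' = LinearMap.id) (hχ' : χ' ∘ₗ χ = LinearMap.id)
    (hA1 : L ∘ₗ A ∘ₗ L = A)
    (hA2 : A ∘ₗ (L ∘ₗ χ ∘ₗ L) = L)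
    (hA3 : (L ∘ₗ χ ∘ₗ L) ∘ₗ A = L) :
    T ∘ₗ (χ - χ ∘ₗ A ∘ₗ χ) ∘ₗ T = χ - χ ∘ₗ A ∘ₗ χ ∧
    (χ - χ ∘ₗ A ∘ₗ χ) ∘ₗ (T ∘ₗ χ' ∘ₗ T) = T ∧
    (T ∘ₗ χ' ∘ₗ T) ∘ₗ (χ - χ ∘ₗ A ∘ₗ χ) = T := by
  subst hT
  simp only [← Module.End.mul_eq_comp, ← Module.End.one_eq_id] at *
  have hAL : A * L = A := by
    conv_lhs => rw [← hA1]
    rw [mul_assoc, mul_assoc, hL]; exact hA1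
  have hLA : L * A = A := by
    conv_lhs => rw [← hA1]
    rw [← mul_assoc, hL]; exact hA1
  have hLχA : L * (χ * A) = L := by
    conv_lhs => rw [← hLA, ← mul_assoc, ← mul_assoc, mul_assoc L χ L]
    exact hA3
  have hAχL : A * (χ * L) = L := by
    conv_lhs => rw [← hAL]
    rw [mul_assoc]; exact hA2
  have h1 : ∀ x : V →ₗ[K] V, L * (L * x) = L * x := fun x => by
    rw [← mul_assoc, hL]
  have h2 : ∀ x : V →ₗ[K] V, A * (L * x) = A * x := fun x => by
    rw [← mul_assoc, hAL]
  have h3 : ∀ x : V →ₗ[K] V, L * (A * x) = A * x := fun x => by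
    rw [← mul_assoc, hLA]
  have h4 : ∀ x : V →ₗ[K] V, L * (χ * (A * x)) = L * x := fun x => by
    rw [← mul_assoc, ← mul_assoc, mul_assoc L χ A, hLχA]
  have h5 : ∀ x : V →ₗ[K] V, A * (χ * (L * x)) = L * x := fun x => by
    rw [← mul_assoc, ← mul_assoc, mul_assoc A χ L, hAχL]
  have h6 : ∀ x : V →ₗ[K] V, χ * (χ' * x) = x := fun x => by
    rw [← mul_assoc, hχ, one_mul]
  have h7 : ∀ x : V →ₗ[K] V, χ' * (χ * x) = x := fun x => by
    rw [← mul_assoc, hχ', one_mul]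
  refine ⟨?_, ?_, ?_⟩ <;>
    simp only [mul_sub, sub_mul, mul_one, one_mul, mul_assoc, h1, h2, h3, h4, h5, h6, h7,
      hL, hAL, hLA, hLχA, hAχL, hχ, hχ'] <;>
    abel
end

section
/- Let V and W be vector spaces over a field, g : W → V and d : V → W linear maps with d∘g : W → W invertible, L = g∘(d∘g)⁻¹∘d the longitudinal projector on V, and k a nonzero scalar. Let χ̂ : V → V be a linear map and assume the scalar response χ := −k·(d∘χ̂∘g) : W → W is invertible. Then A := −k·(g∘χ⁻¹∘d) : V → V satisfies L∘A∘L = A, A∘(L∘χ̂∘L) = L, and (L∘χ̂∘L)∘A = L; that is, A is the inverse of L∘χ̂∘L on the range of L. -/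
/-- With `g` the gradient, `d` the divergence, `d∘g` invertible (inverse `e`),
`L = g∘(d∘g)⁻¹∘d` the longitudinal projector, `k ≠ 0` a scalar, `χt` a tensor
kernel whose scalar response `χ = −k·(d∘χt∘g)` is invertible (inverse `χ'`), the
map `A := −k·(g∘χ⁻¹∘d)` is the inverse of `L∘χt∘L` on the range of `L`. -/
theorem longitudinal_inverse_formula
    {K V W : Type*} [Field K] [AddCommGroup V] [Module K V]
    [AddCommGroup W] [Module K W]
    (g : W →ₗ[K] V) (d : V →ₗ[K] W) (e : W →ₗ[K] W)
    (he1 : (d ∘ₗ g) ∘ₗ e = LinearMap.id) (he2 : e ∘ₗ (d ∘ₗ g) = LinearMap.id)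
    (L : V →ₗ[K] V) (hLdef : L = g ∘ₗ e ∘ₗ d)
    (k : K) (hk : k ≠ 0)
    (χt : V →ₗ[K] V) (χ χ' : W →ₗ[K] W)
    (hχdef : χ = -k • (d ∘ₗ χt ∘ₗ g))
    (hχ1 : χ ∘ₗ χ' = LinearMap.id) (hχ2 : χ' ∘ₗ χ = LinearMap.id) :
    L ∘ₗ (-k • (g ∘ₗ χ' ∘ₗ d)) ∘ₗ L = -k • (g ∘ₗ χ' ∘ₗ d) ∧
    (-k • (g ∘ₗ χ' ∘ₗ d)) ∘ₗ (L ∘ₗ χt ∘ₗ L) = L ∧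
    (L ∘ₗ χt ∘ₗ L) ∘ₗ (-k • (g ∘ₗ χ' ∘ₗ d)) = L := by
  subst hLdef hχdef
  have h1 : ∀ w, d (g (e w)) = w := fun w => by
    simpa using LinearMap.ext_iff.mp he1 w
  have h2 : ∀ w, e (d (g w)) = w := fun w => by
    simpa using LinearMap.ext_iff.mp he2 w
  have hA : ∀ w, -(k • g (χ' (d (χt (g w))))) = g w := fun w => by
    have h := LinearMap.ext_iff.mp hχ2 w
    simp only [LinearMap.comp_apply, LinearMap.smul_apply, LinearMap.id_apply] at h
    conv_rhs => rw [← h]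
    simp [map_smul]
  have hB : ∀ w, -(k • g (e (d (χt (g (χ' w)))))) = g (e w) := fun w => by
    have h := LinearMap.ext_iff.mp hχ1 w
    simp only [LinearMap.comp_apply, LinearMap.smul_apply, LinearMap.id_apply] at h
    conv_rhs => rw [← h]
    simp [map_smul]
  refine ⟨?_, ?_, ?_⟩ <;> ext v <;>
    simp [LinearMap.comp_apply, h1, h2, hA, hB, map_smul]
end

section
/- (Main Lemma.) Let V and W be vector spaces over a field, g : W → V and d : V → W linear maps with d∘g invertible, L = g∘(d∘g)⁻¹∘d, T = id − L, and k a nonzero scalar. Let χ̂ : V → V be an invertible linear map such that χ := −k·(d∘χ̂∘g) : W → W is also invertible. Then X := χ̂ + k·(χ̂∘g∘χ⁻¹∘d∘χ̂) is the inverse of T∘χ̂⁻¹∘T on the range of T; that is, T∘X∘T = X, X∘(T∘χ̂⁻¹∘T) = T, and (T∘χ̂⁻¹∘T)∘X = T. -/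
/-- Main Lemma (Eq. (3) of the paper). With `g` the gradient, `d` the divergence,
`d∘g` invertible (inverse `e`), `L = g∘(d∘g)⁻¹∘d`, `T = id − L`, `k ≠ 0`, and `χt`
an invertible tensor kernel (inverse `χt'`) whose scalar response
`χ = −k·(d∘χt∘g)` is invertible (inverse `χ'`), the map
`X := χt + k·(χt∘g∘χ⁻¹∘d∘χt)` is the inverse of `T∘χt⁻¹∘T` on the range of `T`. -/
theorem main_lemma_transverse_inverse
    {K V W : Type*} [Field K] [AddCommGroup V] [Module K V]
    [AddCommGroup W] [Module K W]
    (g : W →ₗ[K] V) (d : V →ₗ[K] W) (e : W →ₗ[K] W)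
    (he1 : (d ∘ₗ g) ∘ₗ e = LinearMap.id) (he2 : e ∘ₗ (d ∘ₗ g) = LinearMap.id)
    (L T : V →ₗ[K] V) (hLdef : L = g ∘ₗ e ∘ₗ d) (hT : T = LinearMap.id - L)
    (k : K) (hk : k ≠ 0)
    (χt χt' : V →ₗ[K] V)
    (hχt1 : χt ∘ₗ χt' = LinearMap.id) (hχt2 : χt' ∘ₗ χt = LinearMap.id)
    (χ χ' : W →ₗ[K] W)
    (hχdef : χ = -k • (d ∘ₗ χt ∘ₗ g))
    (hχ1 : χ ∘ₗ χ' = LinearMap.id) (hχ2 : χ' ∘ₗ χ = LinearMap.id) :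
    T ∘ₗ (χt + k • (χt ∘ₗ g ∘ₗ χ' ∘ₗ d ∘ₗ χt)) ∘ₗ T
        = χt + k • (χt ∘ₗ g ∘ₗ χ' ∘ₗ d ∘ₗ χt) ∧
    (χt + k • (χt ∘ₗ g ∘ₗ χ' ∘ₗ d ∘ₗ χt)) ∘ₗ (T ∘ₗ χt' ∘ₗ T) = T ∧
    (T ∘ₗ χt' ∘ₗ T) ∘ₗ (χt + k • (χt ∘ₗ g ∘ₗ χ' ∘ₗ d ∘ₗ χt)) = T := by
  have he1' : ∀ w, d (g (e w)) = w := fun w => by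
    simpa [LinearMap.comp_apply] using LinearMap.ext_iff.mp he1 w
  have he2' : ∀ w, e (d (g w)) = w := fun w => by
    simpa [LinearMap.comp_apply] using LinearMap.ext_iff.mp he2 w
  have hχt1' : ∀ v, χt (χt' v) = v := fun v => by
    simpa [LinearMap.comp_apply] using LinearMap.ext_iff.mp hχt1 v
  have hχt2' : ∀ v, χt' (χt v) = v := fun v => by
    simpa [LinearMap.comp_apply] using LinearMap.ext_iff.mp hχt2 v
  have key1 : ∀ w, χ' (d (χt (g w))) = -(k⁻¹ • w) := by
    intro w
    have h := LinearMap.ext_iff.mp hχ2 w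
    simp only [hχdef, LinearMap.comp_apply, LinearMap.neg_apply, LinearMap.smul_apply,
      LinearMap.id_apply, map_neg, map_smul] at h
    have : k • χ' (d (χt (g w))) = -w := neg_eq_iff_eq_neg.mp (by rw [← neg_smul]; exact h)
    calc χ' (d (χt (g w))) = k⁻¹ • (k • χ' (d (χt (g w)))) := by
          rw [smul_smul, inv_mul_cancel₀ hk, one_smul]
      _ = -(k⁻¹ • w) := by rw [this, smul_neg]
  have key2 : ∀ w, d (χt (g (χ' w))) = -(k⁻¹ • w) := by
    intro w
    have h := LinearMap.ext_iff.mp hχ1 w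
    simp only [hχdef, LinearMap.comp_apply, LinearMap.neg_apply, LinearMap.smul_apply,
      LinearMap.id_apply, map_neg, map_smul] at h
    have : k • d (χt (g (χ' w))) = -w := neg_eq_iff_eq_neg.mp (by rw [← neg_smul]; exact h)
    calc d (χt (g (χ' w))) = k⁻¹ • (k • d (χt (g (χ' w)))) := by
          rw [smul_smul, inv_mul_cancel₀ hk, one_smul]
      _ = -(k⁻¹ • w) := by rw [this, smul_neg]
  refine ⟨?_, ?_, ?_⟩ <;> ext x <;>
    simp [hT, hLdef, LinearMap.comp_apply, LinearMap.sub_apply, LinearMap.add_apply,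
      LinearMap.smul_apply, map_add, map_sub, map_smul, key1, key2, he1', he2',
      hχt1', hχt2', smul_smul, mul_inv_cancel₀ hk, smul_neg, neg_smul, sub_eq_iff_eq_add]
end

section
/- Let V and W be vector spaces over a field of characteristic zero, g : W → V and d : V → W linear maps with d∘g invertible, and k a nonzero scalar. Let χ̂ : V → V be invertible with χ := −k·(d∘χ̂∘g) invertible, and set X := χ̂ + k·(χ̂∘g∘χ⁻¹∘d∘χ̂). Then for every linear map f̂ : V → V, the exact identity holds: −k⁻¹·(d∘g)⁻¹∘d∘( f̂ − f̂∘X∘χ̂⁻¹ − χ̂⁻¹∘X∘f̂ + χ̂⁻¹∘X∘f̂∘X∘χ̂⁻¹ )∘g∘(d∘g)⁻¹ = −k·(χ⁻¹∘d∘χ̂∘f̂∘χ̂∘g∘χ⁻¹). In words: the first-order-in-f̂ part of the exact scalar kernel formula collapses to the simplified kernel formula. -/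
private lemma cancel_left' {K : Type*} [Field K] {V W U : Type*} [AddCommGroup V] [Module K V]
    [AddCommGroup W] [Module K W] [AddCommGroup U] [Module K U]
    {a : W →ₗ[K] V} {b : V →ₗ[K] W} (h : a ∘ₗ b = LinearMap.id) (f : U →ₗ[K] V) :
    a ∘ₗ (b ∘ₗ f) = f := by
  rw [← LinearMap.comp_assoc, h, LinearMap.id_comp]

private lemma cancel_left3 {K : Type*} [Field K] {A B C U : Type*} [AddCommGroup A] [Module K A]
    [AddCommGroup B] [Module K B] [AddCommGroup C] [Module K C] [AddCommGroup U] [Module K U]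
    {a : C →ₗ[K] A} {b : B →ₗ[K] C} {c : A →ₗ[K] B}
    (h : a ∘ₗ (b ∘ₗ c) = LinearMap.id) (f : U →ₗ[K] A) :
    a ∘ₗ (b ∘ₗ (c ∘ₗ f)) = f := by
  rw [← LinearMap.comp_assoc f c b]
  exact cancel_left' h f

/-- The first-order-in-`ft` part of the exact scalar kernel formula (Eq. (1))
collapses to the simplified kernel formula (Eq. (2)):
`−k⁻¹·(d∘g)⁻¹∘d∘(ft − ft∘X∘χt⁻¹ − χt⁻¹∘X∘ft + χt⁻¹∘X∘ft∘X∘χt⁻¹)∘g∘(d∘g)⁻¹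
  = −k·(χ⁻¹∘d∘χt∘ft∘χt∘g∘χ⁻¹)`
where `X := χt + k·(χt∘g∘χ⁻¹∘d∘χt)`. -/
theorem first_order_exact_formula_collapses
    {K V W : Type*} [Field K] [CharZero K] [AddCommGroup V] [Module K V]
    [AddCommGroup W] [Module K W]
    (g : W →ₗ[K] V) (d : V →ₗ[K] W) (e : W →ₗ[K] W)
    (he1 : (d ∘ₗ g) ∘ₗ e = LinearMap.id) (he2 : e ∘ₗ (d ∘ₗ g) = LinearMap.id)
    (k : K) (hk : k ≠ 0)
    (χt χt' : V →ₗ[K] V)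
    (hχt1 : χt ∘ₗ χt' = LinearMap.id) (hχt2 : χt' ∘ₗ χt = LinearMap.id)
    (χ χ' : W →ₗ[K] W)
    (hχdef : χ = -k • (d ∘ₗ χt ∘ₗ g))
    (hχ1 : χ ∘ₗ χ' = LinearMap.id) (hχ2 : χ' ∘ₗ χ = LinearMap.id)
    (X : V →ₗ[K] V) (hX : X = χt + k • (χt ∘ₗ g ∘ₗ χ' ∘ₗ d ∘ₗ χt))
    (ft : V →ₗ[K] V) :
    -k⁻¹ • (e ∘ₗ d ∘ₗ (ft - ft ∘ₗ X ∘ₗ χt' - χt' ∘ₗ X ∘ₗ ft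
        + χt' ∘ₗ X ∘ₗ ft ∘ₗ X ∘ₗ χt') ∘ₗ g ∘ₗ e)
      = -k • (χ' ∘ₗ d ∘ₗ χt ∘ₗ ft ∘ₗ χt ∘ₗ g ∘ₗ χ') := by
  have hdge : d ∘ₗ (g ∘ₗ e) = LinearMap.id := by
    rw [← LinearMap.comp_assoc]; exact he1
  subst hX
  simp only [LinearMap.add_comp, LinearMap.comp_add, LinearMap.sub_comp, LinearMap.comp_sub,
    LinearMap.smul_comp, LinearMap.comp_smul, LinearMap.comp_assoc,
    LinearMap.id_comp, LinearMap.comp_id,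
    cancel_left' hχt1, cancel_left' hχt2, cancel_left3 he2, hdge]
  match_scalars <;> field_simp <;> ring
end

section
/- (Main result.) Let V and W be finite-dimensional real normed vector spaces, g : W → V and d : V → W linear maps with d∘g invertible, L = g∘(d∘g)⁻¹∘d, T = id − L, and k a nonzero real number. Let χ̂ : V → V be invertible with χ := −k·(d∘χ̂∘g) invertible, and let f̂ : V → V be any linear map. Let Y be a function from a neighborhood of 0 in ℝ to the endomorphisms of V such that for each t, Y(t) is the inverse of T∘(χ̂⁻¹ − t·f̂)∘T on the range of T, and define the scalar kernel F(t) := −k⁻¹·(d∘g)⁻¹∘d∘( t·f̂ + (χ̂⁻¹ − t·f̂)∘Y(t)∘(χ̂⁻¹ − t·f̂) − χ̂⁻¹∘Y(0)∘χ̂⁻¹ )∘g∘(d∘g)⁻¹ : W → W. Then F(0) = 0 and F is differentiable at t = 0 with derivative F′(0) = −k·(χ⁻¹∘d∘χ̂∘f̂∘χ̂∘g∘χ⁻¹). -/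
open ContinuousLinearMap Asymptotics

set_option maxHeartbeats 2000000 in
set_option synthInstance.maxHeartbeats 1000000 in
/-- Resolvent identity, version 1. -/
lemma aux_res {V : Type*} [NormedAddCommGroup V] [NormedSpace ℝ V]
    (t : ℝ) (T a f y y0 : V →L[ℝ] V)
    (hTT : T ∘L T = T)
    (hy : T ∘L y ∘L T = y) (hy0 : T ∘L y0 ∘L T = y0)
    (hb : y ∘L (T ∘L (a - t • f) ∘L T) = T)
    (hc0 : (T ∘L a ∘L T) ∘L y0 = T) :
    y = y0 + t • (y ∘L ((T ∘L (f ∘L T)) ∘L y0)) := by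
  have hyT : y ∘L T = y := by
    conv_lhs => rw [← hy]
    show T ∘L (y ∘L (T ∘L T)) = y
    rw [hTT]; exact hy
  have hTy0 : T ∘L y0 = y0 := by
    conv_lhs => rw [← hy0]
    show (T ∘L T) ∘L (y0 ∘L T) = y0
    rw [hTT]; exact hy0
  have left : y ∘L ((T ∘L a ∘L T) ∘L y0) = y := by rw [hc0]; exact hyT
  have mid : y ∘L ((T ∘L (a - t • f) ∘L T) ∘L y0) = y0 := by
    show (y ∘L (T ∘L (a - t • f) ∘L T)) ∘L y0 = y0
    rw [hb]; exact hTy0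
  have hdiff : (T ∘L a ∘L T) - (T ∘L (a - t • f) ∘L T) = t • (T ∘L (f ∘L T)) := by
    show T * (a * T) - T * ((a - t • f) * T) = t • (T * (f * T))
    simp only [sub_mul, mul_sub, mul_smul_comm, smul_mul_assoc]
    abel
  calc y = y ∘L ((T ∘L a ∘L T) ∘L y0) - y ∘L ((T ∘L (a - t • f) ∘L T) ∘L y0) + y0 := by
        rw [left, mid]; abel
    _ = y ∘L (((T ∘L a ∘L T) - (T ∘L (a - t • f) ∘L T)) ∘L y0) + y0 := by
        simp only [comp_sub, sub_comp]
    _ = y ∘L ((t • (T ∘L (f ∘L T))) ∘L y0) + y0 := by rw [hdiff]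
    _ = y0 + t • (y ∘L ((T ∘L (f ∘L T)) ∘L y0)) := by
        simp only [smul_comp, comp_smulₛₗ, RingHom.id_apply]; abel

set_option maxHeartbeats 2000000 in
set_option synthInstance.maxHeartbeats 1000000 in
/-- Resolvent identity, version 2. -/
lemma aux_res2 {V : Type*} [NormedAddCommGroup V] [NormedSpace ℝ V]
    (t : ℝ) (T a f y y0 : V →L[ℝ] V)
    (hTT : T ∘L T = T)
    (hy : T ∘L y ∘L T = y) (hy0 : T ∘L y0 ∘L T = y0)
    (hc : (T ∘L (a - t • f) ∘L T) ∘L y = T)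
    (hb0 : y0 ∘L (T ∘L a ∘L T) = T) :
    y = y0 + t • (y0 ∘L ((T ∘L (f ∘L T)) ∘L y)) := by
  have hTy : T ∘L y = y := by
    conv_lhs => rw [← hy]
    show (T ∘L T) ∘L (y ∘L T) = y
    rw [hTT]; exact hy
  have hy0T : y0 ∘L T = y0 := by
    conv_lhs => rw [← hy0]
    show T ∘L (y0 ∘L (T ∘L T)) = y0
    rw [hTT]; exact hy0
  have left : y0 ∘L ((T ∘L a ∘L T) ∘L y) = y := by
    show (y0 ∘L (T ∘L a ∘L T)) ∘L y = y
    rw [hb0]; exact hTy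
  have mid : y0 ∘L ((T ∘L (a - t • f) ∘L T) ∘L y) = y0 := by rw [hc]; exact hy0T
  have hdiff : (T ∘L a ∘L T) - (T ∘L (a - t • f) ∘L T) = t • (T ∘L (f ∘L T)) := by
    show T * (a * T) - T * ((a - t • f) * T) = t • (T * (f * T))
    simp only [sub_mul, mul_sub, mul_smul_comm, smul_mul_assoc]
    abel
  calc y = y0 ∘L ((T ∘L a ∘L T) ∘L y) - y0 ∘L ((T ∘L (a - t • f) ∘L T) ∘L y) + y0 := by
        rw [left, mid]; abel
    _ = y0 ∘L (((T ∘L a ∘L T) - (T ∘L (a - t • f) ∘L T)) ∘L y) + y0 := by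
        simp only [comp_sub, sub_comp]
    _ = y0 ∘L ((t • (T ∘L (f ∘L T))) ∘L y) + y0 := by rw [hdiff]
    _ = y0 + t • (y0 ∘L ((T ∘L (f ∘L T)) ∘L y)) := by
        simp only [smul_comp, comp_smulₛₗ, RingHom.id_apply]; abel

set_option maxHeartbeats 2000000 in
set_option synthInstance.maxHeartbeats 1000000 in
/-- Second order expansion of the kernel expression. -/
lemma aux_expand {V : Type*} [NormedAddCommGroup V] [NormedSpace ℝ V]
    (t : ℝ) (a f m y y0 : V →L[ℝ] V)
    (h1 : y = y0 + t • (y ∘L (m ∘L y0)))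
    (h2 : y = y0 + t • (y0 ∘L (m ∘L y))) :
    t • f + (a - t • f) ∘L y ∘L (a - t • f) - a ∘L y0 ∘L a
      = t • (f + a ∘L (y0 ∘L (m ∘L (y0 ∘L a))) - f ∘L (y0 ∘L a) - a ∘L (y0 ∘L f))
        + (t * t) • ((a ∘L (y0 ∘L m) - f) ∘L (y ∘L ((m ∘L (y0 ∘L a)) - f))) := by
  have e1 : a ∘L (y ∘L a) = a ∘L (y0 ∘L a) + t • (a ∘L (y0 ∘L (m ∘L (y0 ∘L a))))
      + (t * t) • (a ∘L (y0 ∘L (m ∘L (y ∘L (m ∘L (y0 ∘L a)))))) := by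
    conv_lhs => rw [h2, h1]
    simp only [← mul_def, mul_add, add_mul, mul_smul_comm, smul_mul_assoc, smul_smul,
      smul_add, mul_assoc]
    module
  have e2 : f ∘L (y ∘L a) = f ∘L (y0 ∘L a) + t • (f ∘L (y ∘L (m ∘L (y0 ∘L a)))) := by
    conv_lhs => rw [h1]
    simp only [← mul_def, mul_add, add_mul, mul_smul_comm, smul_mul_assoc, smul_smul,
      smul_add, mul_assoc]
  have e3 : a ∘L (y ∘L f) = a ∘L (y0 ∘L f) + t • (a ∘L (y0 ∘L (m ∘L (y ∘L f)))) := by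
    conv_lhs => rw [h2]
    simp only [← mul_def, mul_add, add_mul, mul_smul_comm, smul_mul_assoc, smul_smul,
      smul_add, mul_assoc]
  have estep : t • f + (a - t • f) ∘L y ∘L (a - t • f) - a ∘L y0 ∘L a
      = t • f + a ∘L (y ∘L a) - t • (f ∘L (y ∘L a)) - t • (a ∘L (y ∘L f))
        + (t * t) • (f ∘L (y ∘L f)) - a ∘L (y0 ∘L a) := by
    simp only [← mul_def, sub_mul, mul_sub, mul_smul_comm, smul_mul_assoc, smul_smul,
      mul_assoc]
    module
  rw [estep, e1, e2, e3]
  simp only [← mul_def, smul_add, smul_sub, mul_add, add_mul, sub_mul, mul_sub, smul_smul,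
    mul_smul_comm, smul_mul_assoc, mul_assoc]
  module

set_option maxHeartbeats 4000000 in
set_option synthInstance.maxHeartbeats 1000000 in
/-- Main result (Eq. (2) of the paper). Let `F t` be the exact scalar xc kernel
(Eq. (1)) generated by the tensor kernel `t·ft`. Then `F 0 = 0` and `F` is
differentiable at `t = 0` with derivative
`F′(0) = −k·(χ⁻¹∘d∘χt∘ft∘χt∘g∘χ⁻¹)` — the simplified scalar–tensor relation. -/
theorem main_result_simplified_kernel
    {V W : Type*} [NormedAddCommGroup V] [NormedSpace ℝ V] [FiniteDimensional ℝ V]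
    [NormedAddCommGroup W] [NormedSpace ℝ W] [FiniteDimensional ℝ W]
    (g : W →L[ℝ] V) (d : V →L[ℝ] W) (e : W →L[ℝ] W)
    (he1 : (d ∘L g) ∘L e = ContinuousLinearMap.id ℝ W)
    (he2 : e ∘L (d ∘L g) = ContinuousLinearMap.id ℝ W)
    (L T : V →L[ℝ] V)
    (hLdef : L = g ∘L e ∘L d)
    (hT : T = ContinuousLinearMap.id ℝ V - L)
    (k : ℝ) (hk : k ≠ 0)
    (χt χt' : V →L[ℝ] V)
    (hχt1 : χt ∘L χt' = ContinuousLinearMap.id ℝ V)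
    (hχt2 : χt' ∘L χt = ContinuousLinearMap.id ℝ V)
    (χ χ' : W →L[ℝ] W)
    (hχdef : χ = -k • (d ∘L χt ∘L g))
    (hχ1 : χ ∘L χ' = ContinuousLinearMap.id ℝ W)
    (hχ2 : χ' ∘L χ = ContinuousLinearMap.id ℝ W)
    (ft : V →L[ℝ] V)
    (Y : ℝ → (V →L[ℝ] V)) (s : Set ℝ) (hs : s ∈ nhds (0 : ℝ))
    (hY : ∀ t ∈ s,
      T ∘L Y t ∘L T = Y t ∧
      Y t ∘L (T ∘L (χt' - t • ft) ∘L T) = T ∧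
      (T ∘L (χt' - t • ft) ∘L T) ∘L Y t = T)
    (F : ℝ → (W →L[ℝ] W))
    (hF : ∀ t : ℝ, F t =
      -k⁻¹ • (e ∘L d ∘L
        (t • ft + (χt' - t • ft) ∘L Y t ∘L (χt' - t • ft) - χt' ∘L Y 0 ∘L χt')
        ∘L g ∘L e)) :
    F 0 = 0 ∧ HasDerivAt F (-k • (χ' ∘L d ∘L χt ∘L ft ∘L χt ∘L g ∘L χ')) 0 := by
  have h0s : (0 : ℝ) ∈ s := mem_of_mem_nhds hs
  -- pointwise basic facts
  have pf1 : ∀ w, d (g (e w)) = w := fun w => by simpa using DFunLike.congr_fun he1 w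
  have pf2 : ∀ w, e (d (g w)) = w := fun w => by simpa using DFunLike.congr_fun he2 w
  have pfL : ∀ x, L x = g (e (d x)) := fun x => by rw [hLdef]; rfl
  have pfT : ∀ x, T x = x - g (e (d x)) := fun x => by rw [hT]; simp [pfL]
  have pfdT : ∀ x, d (T x) = 0 := fun x => by simp [pfT, map_sub, pf1]
  have pfTg : ∀ w, T (g w) = 0 := fun w => by simp [pfT, pf2]
  have hTT : T ∘L T = T := by
    ext x
    simp [ContinuousLinearMap.comp_apply, pfT, pf1, map_sub, map_zero, sub_zero, sub_self]
  -- hY at 0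
  obtain ⟨hY0a, hY0b, hY0c⟩ := hY 0 h0s
  simp only [zero_smul, sub_zero] at hY0a hY0b hY0c
  have hTY0 : T ∘L Y 0 = Y 0 := by
    conv_lhs => rw [← hY0a]
    show (T ∘L T) ∘L (Y 0 ∘L T) = Y 0
    rw [hTT]; exact hY0a
  have hY0T : Y 0 ∘L T = Y 0 := by
    conv_lhs => rw [← hY0a]
    show T ∘L (Y 0 ∘L (T ∘L T)) = Y 0
    rw [hTT]; exact hY0a
  have pfTY0 : ∀ x, T (Y 0 x) = Y 0 x := fun x => DFunLike.congr_fun hTY0 x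
  have pfY0T : ∀ x, Y 0 (T x) = Y 0 x := fun x => DFunLike.congr_fun hY0T x
  have pfdY0 : ∀ x, d (Y 0 x) = 0 := fun x => by rw [← pfTY0 x, pfdT]
  have pfY0g : ∀ w, Y 0 (g w) = 0 := fun w => by rw [← pfY0T (g w), pfTg, map_zero]
  have hTχY0 : T ∘L (χt' ∘L Y 0) = T := by
    conv_lhs => rw [← hTY0]
    show (T ∘L χt' ∘L T) ∘L Y 0 = T
    exact hY0c
  have hY0χT : (Y 0 ∘L χt') ∘L T = T := by
    conv_lhs => rw [← hY0T]
    show Y 0 ∘L (T ∘L (χt' ∘L T)) = T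
    exact hY0b
  have pfTχY0 : ∀ x, T (χt' (Y 0 x)) = T x := fun x => DFunLike.congr_fun hTχY0 x
  have pfY0χT : ∀ x, Y 0 (χt' (T x)) = T x := fun x => DFunLike.congr_fun hY0χT x
  have pfχ : ∀ w, χ w = -k • d (χt (g w)) := fun w => by rw [hχdef]; rfl
  have pfχ'χ : ∀ w, χ' (χ w) = w := fun w => by simpa using DFunLike.congr_fun hχ2 w
  have pfχχ' : ∀ w, χ (χ' w) = w := fun w => by simpa using DFunLike.congr_fun hχ1 w
  have pfχtχt' : ∀ x, χt (χt' x) = x := fun x => by simpa using DFunLike.congr_fun hχt1 x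
  have pfχt'χt : ∀ x, χt' (χt x) = x := fun x => by simpa using DFunLike.congr_fun hχt2 x
  -- F 0 = 0
  have hF0 : F 0 = 0 := by rw [hF 0]; simp
  -- lemma (a)
  have ha : e ∘L (d ∘L (ContinuousLinearMap.id ℝ V - χt' ∘L Y 0)) =
      -k • (χ' ∘L (d ∘L χt)) := by
    ext v
    have hgL : g (e (d (v - χt' (Y 0 v)))) = v - χt' (Y 0 v) := by
      have hTv : T (v - χt' (Y 0 v)) = 0 := by rw [map_sub, pfTχY0, sub_self]
      have h2 := pfT (v - χt' (Y 0 v))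
      rw [hTv] at h2
      exact (sub_eq_zero.mp h2.symm).symm
    have key : χ (e (d (v - χt' (Y 0 v)))) = -k • d (χt v) := by
      rw [pfχ, hgL, map_sub, map_sub, pfχtχt', pfdY0, sub_zero]
    have h3 := congrArg χ' key
    rw [pfχ'χ] at h3
    simpa [ContinuousLinearMap.comp_apply, ContinuousLinearMap.sub_apply, map_smul] using h3
  -- lemma (b)
  have hb : (ContinuousLinearMap.id ℝ V - Y 0 ∘L χt') ∘L (g ∘L e) =
      -k • (χt ∘L (g ∘L χ')) := by
    have key : ∀ u, (ContinuousLinearMap.id ℝ V - Y 0 ∘L χt') (g (e (χ u))) =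
        -k • χt (g u) := by
      intro u
      have hLQ : ∀ x, (ContinuousLinearMap.id ℝ V - Y 0 ∘L χt') (g (e (d x))) =
          x - Y 0 (χt' x) := by
        intro x
        have hTx : (ContinuousLinearMap.id ℝ V - Y 0 ∘L χt') (T x) = 0 := by
          simp [ContinuousLinearMap.sub_apply, ContinuousLinearMap.comp_apply, pfY0χT]
        have hdecomp : g (e (d x)) = x - T x := by rw [pfT]; abel
        rw [hdecomp, map_sub, hTx, sub_zero]
        simp [ContinuousLinearMap.sub_apply, ContinuousLinearMap.comp_apply]
      have hsm : g (e (χ u)) = -k • g (e (d (χt (g u)))) := by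
        rw [pfχ, map_smul, map_smul]
      rw [hsm, map_smul, hLQ, pfχt'χt, pfY0g, sub_zero]
    ext w
    have h := key (χ' w)
    rw [pfχχ'] at h
    simpa [ContinuousLinearMap.comp_apply, map_smul] using h
  -- simplify the middle of the first-order coefficient
  have hmid : Y 0 ∘L ((T ∘L (ft ∘L T)) ∘L (Y 0 ∘L χt')) = Y 0 ∘L (ft ∘L (Y 0 ∘L χt')) := by
    have s1 : T ∘L (Y 0 ∘L χt') = Y 0 ∘L χt' := by
      show (T ∘L Y 0) ∘L χt' = Y 0 ∘L χt'
      rw [hTY0]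
    calc Y 0 ∘L ((T ∘L (ft ∘L T)) ∘L (Y 0 ∘L χt'))
        = Y 0 ∘L (T ∘L (ft ∘L (T ∘L (Y 0 ∘L χt')))) := rfl
      _ = Y 0 ∘L (T ∘L (ft ∘L (Y 0 ∘L χt'))) := by rw [s1]
      _ = (Y 0 ∘L T) ∘L (ft ∘L (Y 0 ∘L χt')) := rfl
      _ = Y 0 ∘L (ft ∘L (Y 0 ∘L χt')) := by rw [hY0T]
  -- factor the first-order coefficient
  have hX1 : ft + χt' ∘L (Y 0 ∘L ((T ∘L (ft ∘L T)) ∘L (Y 0 ∘L χt'))) - ft ∘L (Y 0 ∘L χt')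
      - χt' ∘L (Y 0 ∘L ft)
      = (ContinuousLinearMap.id ℝ V - χt' ∘L Y 0) ∘L
        (ft ∘L (ContinuousLinearMap.id ℝ V - Y 0 ∘L χt')) := by
    rw [hmid]
    show ft + χt' * (Y 0 * (ft * (Y 0 * χt'))) - ft * (Y 0 * χt') - χt' * (Y 0 * ft)
      = (1 - χt' * Y 0) * (ft * (1 - Y 0 * χt'))
    noncomm_ring
  -- core identity for the derivative
  have hcore : e ∘L (d ∘L ((ft + χt' ∘L (Y 0 ∘L ((T ∘L (ft ∘L T)) ∘L (Y 0 ∘L χt')))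
        - ft ∘L (Y 0 ∘L χt') - χt' ∘L (Y 0 ∘L ft)) ∘L (g ∘L e)))
      = (k * k) • (χ' ∘L d ∘L χt ∘L ft ∘L χt ∘L g ∘L χ') := by
    rw [hX1]
    show (e ∘L (d ∘L (ContinuousLinearMap.id ℝ V - χt' ∘L Y 0))) ∘L
        (ft ∘L ((ContinuousLinearMap.id ℝ V - Y 0 ∘L χt') ∘L (g ∘L e)))
      = (k * k) • (χ' ∘L d ∘L χt ∘L ft ∘L χt ∘L g ∘L χ')
    rw [ha, hb]
    simp only [ContinuousLinearMap.smul_comp, ContinuousLinearMap.comp_smulₛₗ,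
      RingHom.id_apply, smul_smul]
    rw [show (-k * -k : ℝ) = k * k by ring]
    rfl
  -- second-order expansion of F
  have hinner : ∀ t ∈ s,
      (t • ft + (χt' - t • ft) ∘L Y t ∘L (χt' - t • ft) - χt' ∘L Y 0 ∘L χt')
      = t • (ft + χt' ∘L (Y 0 ∘L ((T ∘L (ft ∘L T)) ∘L (Y 0 ∘L χt')))
          - ft ∘L (Y 0 ∘L χt') - χt' ∘L (Y 0 ∘L ft))
        + (t * t) • ((χt' ∘L (Y 0 ∘L (T ∘L (ft ∘L T))) - ft) ∘L
            (Y t ∘L (((T ∘L (ft ∘L T)) ∘L (Y 0 ∘L χt')) - ft))) := by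
    intro t ht
    exact aux_expand t χt' ft (T ∘L (ft ∘L T)) (Y t) (Y 0)
      (aux_res t T χt' ft (Y t) (Y 0) hTT (hY t ht).1 hY0a (hY t ht).2.1 hY0c)
      (aux_res2 t T χt' ft (Y t) (Y 0) hTT (hY t ht).1 hY0a (hY t ht).2.2 hY0b)
  -- the expansion of F
  have hFt : ∀ t ∈ s, F t = t • (-k • (χ' ∘L d ∘L χt ∘L ft ∘L χt ∘L g ∘L χ'))
      + (t * t) • (-k⁻¹ • ((e ∘L (d ∘L (χt' ∘L (Y 0 ∘L (T ∘L (ft ∘L T))) - ft))) ∘L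
          (Y t ∘L ((((T ∘L (ft ∘L T)) ∘L (Y 0 ∘L χt')) - ft) ∘L (g ∘L e))))) := by
    intro t ht
    rw [hF t, hinner t ht]
    have hsplit : e ∘L d ∘L
        (t • (ft + χt' ∘L (Y 0 ∘L ((T ∘L (ft ∘L T)) ∘L (Y 0 ∘L χt')))
          - ft ∘L (Y 0 ∘L χt') - χt' ∘L (Y 0 ∘L ft))
        + (t * t) • ((χt' ∘L (Y 0 ∘L (T ∘L (ft ∘L T))) - ft) ∘L
            (Y t ∘L (((T ∘L (ft ∘L T)) ∘L (Y 0 ∘L χt')) - ft)))) ∘L g ∘L e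
        = t • (e ∘L (d ∘L ((ft + χt' ∘L (Y 0 ∘L ((T ∘L (ft ∘L T)) ∘L (Y 0 ∘L χt')))
            - ft ∘L (Y 0 ∘L χt') - χt' ∘L (Y 0 ∘L ft)) ∘L (g ∘L e))))
          + (t * t) • (e ∘L (d ∘L (((χt' ∘L (Y 0 ∘L (T ∘L (ft ∘L T))) - ft) ∘L
              (Y t ∘L (((T ∘L (ft ∘L T)) ∘L (Y 0 ∘L χt')) - ft))) ∘L (g ∘L e)))) := by
      ext w
      simp [ContinuousLinearMap.comp_apply, ContinuousLinearMap.add_apply,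
        ContinuousLinearMap.smul_apply, map_add, map_smul]
    rw [hsplit, hcore]
    show -k⁻¹ • (t • ((k * k) • (χ' ∘L d ∘L χt ∘L ft ∘L χt ∘L g ∘L χ'))
        + (t * t) • ((e ∘L (d ∘L (χt' ∘L (Y 0 ∘L (T ∘L (ft ∘L T))) - ft))) ∘L
          (Y t ∘L ((((T ∘L (ft ∘L T)) ∘L (Y 0 ∘L χt')) - ft) ∘L (g ∘L e))))) = _
    match_scalars <;> field_simp <;> ring
  -- conclusion
  refine ⟨hF0, ?_⟩
  rw [hasDerivAt_iff_isLittleO]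
  set D : W →L[ℝ] W := -k • (χ' ∘L d ∘L χt ∘L ft ∘L χt ∘L g ∘L χ') with hD
  set U' : V →L[ℝ] W := e ∘L (d ∘L (χt' ∘L (Y 0 ∘L (T ∘L (ft ∘L T))) - ft)) with hU'
  set Q' : W →L[ℝ] V := (((T ∘L (ft ∘L T)) ∘L (Y 0 ∘L χt')) - ft) ∘L (g ∘L e) with hQ'
  set C0 : ℝ := ‖(T ∘L (ft ∘L T)) ∘L Y 0‖ with hC0
  set δ : ℝ := (2 * (C0 + 1))⁻¹ with hδ
  have hC0nn : 0 ≤ C0 := norm_nonneg _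
  have hδpos : 0 < δ := by rw [hδ]; positivity
  have hδ1 : δ * (2 * (C0 + 1)) = 1 := by
    rw [hδ]; field_simp
  have hδC : δ * C0 ≤ 1 / 2 := by nlinarith [hδpos.le]
  have hbigO : (fun t => F t - F 0 - (t - 0) • D) =O[nhds 0] (fun t : ℝ => t * t) := by
    rw [Asymptotics.isBigO_iff]
    refine ⟨|k|⁻¹ * (‖U'‖ * ((2 * ‖Y 0‖ + 1) * ‖Q'‖)), ?_⟩
    filter_upwards [hs, Metric.closedBall_mem_nhds (0 : ℝ) hδpos] with t ht htb
    have htδ : |t| ≤ δ := by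
      simpa [Metric.mem_closedBall, Real.dist_eq, sub_zero] using htb
    have hres := aux_res t T χt' ft (Y t) (Y 0) hTT (hY t ht).1 hY0a (hY t ht).2.1 hY0c
    have hYb : ‖Y t‖ ≤ 2 * ‖Y 0‖ + 1 := by
      have h1 : ‖Y t‖ ≤ ‖Y 0‖ + |t| * (‖Y t‖ * C0) := by
        conv_lhs => rw [hres]
        refine (norm_add_le _ _).trans ?_
        gcongr
        have hns : ‖t • (Y t ∘L ((T ∘L (ft ∘L T)) ∘L Y 0))‖
            = |t| * ‖Y t ∘L ((T ∘L (ft ∘L T)) ∘L Y 0)‖ := by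
          simpa using norm_smul t (Y t ∘L ((T ∘L (ft ∘L T)) ∘L Y 0))
        rw [hns]
        gcongr
        exact ContinuousLinearMap.opNorm_comp_le _ _
      have e1 : |t| * (‖Y t‖ * C0) ≤ δ * (‖Y t‖ * C0) := by
        apply mul_le_mul_of_nonneg_right htδ; positivity
      have e2 : δ * (‖Y t‖ * C0) ≤ (1 / 2) * ‖Y t‖ := by
        nlinarith [norm_nonneg (Y t), hδpos.le]
      nlinarith [norm_nonneg (Y 0)]
    rw [hFt t ht, hF0]
    have hcollapse : ∀ Z : W →L[ℝ] W,
        t • D + (t * t) • Z - 0 - (t - 0) • D = (t * t) • Z := fun Z => by module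
    rw [hcollapse]
    calc ‖(t * t) • (-k⁻¹ • (U' ∘L (Y t ∘L Q')))‖
        ≤ |t * t| * (|k|⁻¹ * ‖U' ∘L (Y t ∘L Q')‖) := by
          have n1 : ‖(t * t) • (-k⁻¹ • (U' ∘L (Y t ∘L Q')))‖
              = |t * t| * ‖(-k⁻¹) • (U' ∘L (Y t ∘L Q'))‖ := by
            simpa using norm_smul (t * t) ((-k⁻¹) • (U' ∘L (Y t ∘L Q')))
          have n2 : ‖(-k⁻¹) • (U' ∘L (Y t ∘L Q'))‖
              = |k|⁻¹ * ‖U' ∘L (Y t ∘L Q')‖ := by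
            simpa [abs_neg, abs_inv] using norm_smul (-k⁻¹) (U' ∘L (Y t ∘L Q'))
          rw [n1, n2]
      _ ≤ |t * t| * (|k|⁻¹ * (‖U'‖ * (‖Y t‖ * ‖Q'‖))) := by
          gcongr
          calc ‖U' ∘L (Y t ∘L Q')‖ ≤ ‖U'‖ * ‖Y t ∘L Q'‖ :=
                ContinuousLinearMap.opNorm_comp_le _ _
            _ ≤ ‖U'‖ * (‖Y t‖ * ‖Q'‖) := by
                gcongr
                exact ContinuousLinearMap.opNorm_comp_le _ _
      _ ≤ |t * t| * (|k|⁻¹ * (‖U'‖ * ((2 * ‖Y 0‖ + 1) * ‖Q'‖))) := by gcongr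
      _ = |k|⁻¹ * (‖U'‖ * ((2 * ‖Y 0‖ + 1) * ‖Q'‖)) * ‖t * t‖ := by
          rw [Real.norm_eq_abs]; ring
  have hlo : (fun t : ℝ => t * t) =o[nhds 0] (fun t : ℝ => t - 0) := by
    simp only [sub_zero]
    have h1 : (fun t : ℝ => t) =o[nhds 0] (fun _ : ℝ => (1 : ℝ)) := by
      rw [Asymptotics.isLittleO_one_iff]
      exact Filter.tendsto_id
    simpa using h1.mul_isBigO (Asymptotics.isBigO_refl (fun t : ℝ => t) (nhds 0))
  exact hbigO.trans_isLittleO hlo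
end

section
/- (Purely longitudinal case.) Let V and W be vector spaces over a field, g : W → V and d : V → W linear maps with d∘g invertible, and k a nonzero scalar. Let χ̂ : V → V be a linear map with χ := −k·(d∘χ̂∘g) invertible. If the tensor kernel is purely longitudinal, f̂ = −k·(g∘φ∘d) for some linear map φ : W → W, then the simplified scalar kernel formula recovers φ exactly: −k·(χ⁻¹∘d∘χ̂∘f̂∘χ̂∘g∘χ⁻¹) = φ. -/
/-- Purely longitudinal case (Eq. (8)): if the tensor kernel is purely
longitudinal, `ft = −k·(g∘φ∘d)`, then the simplified scalar kernel formula
recovers `φ` exactly: `−k·(χ⁻¹∘d∘χt∘ft∘χt∘g∘χ⁻¹) = φ`. -/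
theorem purely_longitudinal_case
    {K V W : Type*} [Field K] [AddCommGroup V] [Module K V]
    [AddCommGroup W] [Module K W]
    (g : W →ₗ[K] V) (d : V →ₗ[K] W) (e : W →ₗ[K] W)
    (he1 : (d ∘ₗ g) ∘ₗ e = LinearMap.id) (he2 : e ∘ₗ (d ∘ₗ g) = LinearMap.id)
    (k : K) (hk : k ≠ 0)
    (χt : V →ₗ[K] V) (χ χ' : W →ₗ[K] W)
    (hχdef : χ = -k • (d ∘ₗ χt ∘ₗ g))
    (hχ1 : χ ∘ₗ χ' = LinearMap.id) (hχ2 : χ' ∘ₗ χ = LinearMap.id)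
    (φ : W →ₗ[K] W) (ft : V →ₗ[K] V) (hf : ft = -k • (g ∘ₗ φ ∘ₗ d)) :
    -k • (χ' ∘ₗ d ∘ₗ χt ∘ₗ ft ∘ₗ χt ∘ₗ g ∘ₗ χ') = φ := by
  have hk' : (-k) ≠ 0 := neg_ne_zero.mpr hk
  have fact1 : ∀ w, χ' (d (χt (g w))) = (-k)⁻¹ • w := by
    intro w
    have h := LinearMap.ext_iff.mp hχ2 w
    rw [hχdef] at h
    simp only [LinearMap.comp_apply, LinearMap.smul_apply, map_smul,
      LinearMap.id_apply] at h
    exact ((inv_smul_eq_iff₀ hk').mpr h.symm).symm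
  have fact2 : ∀ w, d (χt (g (χ' w))) = (-k)⁻¹ • w := by
    intro w
    have h := LinearMap.ext_iff.mp hχ1 w
    rw [hχdef] at h
    simp only [LinearMap.comp_apply, LinearMap.smul_apply,
      LinearMap.id_apply] at h
    exact ((inv_smul_eq_iff₀ hk').mpr h.symm).symm
  ext x
  simp only [LinearMap.smul_apply, LinearMap.comp_apply, hf, map_smul]
  rw [fact2, map_smul, map_smul, map_smul, map_smul, map_smul, fact1]
  simp only [map_smul, smul_smul]
  have hone : (-k * (-k * ((-k)⁻¹ * (-k)⁻¹))) = 1 := by field_simp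
  rw [hone, one_smul]
end
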